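/- Assume Phi satisfies the Restricted Isometry Condition with parameters (2n, eps), 0 < eps < 1. Let I and J be disjoint index sets with |I ∪ J| <= 2n, and let P_I and P_J be the orthogonal projections in R^N onto the column spans of Phi restricted to I and to J respectively. Then the operator norm of P_I P_J is at most 2.2 * eps. -/

import Mathlib

open scoped BigOperators

noncomputable def l2 {d : ℕ} (v : Fin d → ℝ) : ℝ := Real.sqrt (∑ i, (v i)^2)

noncomputable def l1 {d : ℕ} (v : Fin d → ℝ) : ℝ := ∑ i, |v i|

noncomputable def linf {d : ℕ} (v : Fin d → ℝ) : ℝ := ⨆ i, |v i|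

noncomputable def restrict {d : ℕ} (v : Fin d → ℝ) (T : Finset (Fin d)) : Fin d → ℝ :=
  fun i => if i ∈ T then v i else 0

open Classical in
noncomputable def spt {d : ℕ} (v : Fin d → ℝ) : Finset (Fin d) :=
  Finset.univ.filter (fun i => v i ≠ 0)

def RIC {N d : ℕ} (Φ : Matrix (Fin N) (Fin d) ℝ) (m : ℕ) (ε : ℝ) : Prop :=
  ∀ z : Fin d → ℝ, (spt z).card ≤ m →
    (1 - ε) * l2 z ≤ l2 (Φ.mulVec z) ∧ l2 (Φ.mulVec z) ≤ (1 + ε) * l2 z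

noncomputable def proj {N : ℕ} (L : Submodule ℝ (EuclideanSpace ℝ (Fin N))) :
    EuclideanSpace ℝ (Fin N) →L[ℝ] EuclideanSpace ℝ (Fin N) :=
  L.subtypeL.comp L.orthogonalProjectionOnto

noncomputable def colSpan {N d : ℕ} (Φ : Matrix (Fin N) (Fin d) ℝ) (I : Finset (Fin d)) :
    Submodule ℝ (EuclideanSpace ℝ (Fin N)) :=
  Submodule.span ℝ ((fun j => (WithLp.toLp 2 (fun i => Φ i j) : EuclideanSpace ℝ (Fin N))) '' (I : Set (Fin d)))

lemma l2_sq {d : ℕ} (v : Fin d → ℝ) : l2 v ^ 2 = ∑ i, (v i)^2 :=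
  Real.sq_sqrt (by positivity)

lemma l2_nonneg {d : ℕ} (v : Fin d → ℝ) : 0 ≤ l2 v := Real.sqrt_nonneg _

lemma spt_subset {d : ℕ} {v : Fin d → ℝ} {T : Finset (Fin d)}
    (h : ∀ i, v i ≠ 0 → i ∈ T) : spt v ⊆ T := by
  intro i hi
  classical
  rw [spt, Finset.mem_filter] at hi
  exact h i hi.2

-- quadratic discriminant lemma

lemma sq_le_of_forall_quad (P A B : ℝ) (hA : 0 ≤ A) (hB : 0 ≤ B)
    (h : ∀ t : ℝ, 2 * t * P ≤ A + t^2 * B) : P^2 ≤ A * B := by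
  rcases hB.lt_or_eq with hB' | hB'
  · have hBne : B ≠ 0 := ne_of_gt hB'
    have e := h (P / B)
    have e2 : 2 * (P/B) * P = 2 * (P^2 / B) := by ring
    have e3 : (P/B)^2 * B = P^2 / B := by field_simp
    rw [e2, e3] at e
    have e4 : P^2 / B ≤ A := by linarith
    calc P^2 = P^2 / B * B := by field_simp
    _ ≤ A * B := by
      exact mul_le_mul_of_nonneg_right e4 hB
  · have hP : P = 0 := by
      by_contra hP
      have e := h ((A+1) / (2*P))
      rw [← hB'] at e
      have e5 : 2 * ((A+1)/(2*P)) * P = A + 1 := by field_simp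
      rw [e5] at e
      simp only [mul_zero, add_zero] at e
      linarith
    rw [hP]
    simpa using mul_nonneg hA hB

lemma branch1 (ε α2 β2 A B P : ℝ) (hε : 0 < ε) (hε1 : ε < 1)
    (hα : 0 ≤ α2) (hβ : 0 ≤ β2)
    (hA : 0 ≤ A) (hB : 0 ≤ B)
    (hP : P^2 ≤ A * B)
    (hs : A*β2 + B*α2 ≤ 4*ε*(α2*β2))
    (hG : 0 < α2*β2) :
    P^2 ≤ 4.84*ε^2*(((1-ε)^2*α2 + A)*((1-ε)^2*β2 + B)) := by
  have n2 : 4*(α2*β2)*(4*ε^2*(((1-ε)^2*α2 + A)*((1-ε)^2*β2 + B))) - 4*(α2*β2)*((1+ε^2)^2*(A*B)) =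
      (1-ε)^2*(4*ε*(α2*β2) - (A*β2 + B*α2))*((1+ε)^2*(A*β2 + B*α2) + 4*ε*(1-ε)^2*(α2*β2))
      + (1-ε)^2*(1+ε)^2*(A*β2 - B*α2)^2 := by ring
  have hs0 : 0 ≤ A*β2 + B*α2 := by positivity
  have n1 : 0 ≤ (1-ε)^2*(4*ε*(α2*β2) - (A*β2 + B*α2))*((1+ε)^2*(A*β2 + B*α2) + 4*ε*(1-ε)^2*(α2*β2)) :=
    mul_nonneg (mul_nonneg (by positivity) (by linarith)) (by positivity)
  have nsq : 0 ≤ (1-ε)^2*(1+ε)^2*(A*β2 - B*α2)^2 := by positivity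
  have n3 : 4*(α2*β2)*((1+ε^2)^2*(A*B)) ≤ 4*(α2*β2)*(4*ε^2*(((1-ε)^2*α2 + A)*((1-ε)^2*β2 + B))) := by
    linarith [n2, n1, nsq]
  have n4 : A*B ≤ (1+ε^2)^2*(A*B) := by nlinarith [mul_nonneg (sq_nonneg ε) (mul_nonneg hA hB), mul_nonneg (mul_nonneg (sq_nonneg ε) (sq_nonneg ε)) (mul_nonneg hA hB)]
  have n5 : (1+ε^2)^2*(A*B) ≤ 4*ε^2*(((1-ε)^2*α2 + A)*((1-ε)^2*β2 + B)) :=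
    le_of_mul_le_mul_left n3 (by linarith : (0:ℝ) < 4*(α2*β2))
  have hXY : 0 ≤ ((1-ε)^2*α2 + A)*((1-ε)^2*β2 + B) := by positivity
  nlinarith [hP, n4, n5, mul_nonneg (mul_nonneg (le_of_lt hε) (le_of_lt hε)) hXY]

lemma branch2 (ε α2 β2 A B P : ℝ) (hε : 0 < ε) (hε1 : ε < 1)
    (hα : 0 ≤ α2) (hβ : 0 ≤ β2)
    (hA : 0 ≤ A) (hB : 0 ≤ B)
    (hX : 0 ≤ (1+ε)^2*α2 - A) (hY : 0 ≤ (1+ε)^2*β2 - B)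
    (hP : P^2 ≤ A * B)
    (hs : A*β2 + B*α2 ≤ 4*ε*(α2*β2))
    (hG : 0 < α2*β2) :
    P^2 ≤ 4.84*ε^2*(((1+ε)^2*α2 - A)*((1+ε)^2*β2 - B)) := by
  have n2 : 4*(α2*β2)*(4*ε^2*(((1+ε)^2*α2 - A)*((1+ε)^2*β2 - B))) - 4*(α2*β2)*((1+ε^2)^2*(A*B)) =
      (1+ε)^2*(4*ε*(α2*β2) - (A*β2 + B*α2))*((1-ε)^2*(A*β2 + B*α2) + 4*ε*(1+ε)^2*(α2*β2))
      + (1-ε)^2*(1+ε)^2*(A*β2 - B*α2)^2 := by ring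
  have hs0 : 0 ≤ A*β2 + B*α2 := by positivity
  have n1 : 0 ≤ (1+ε)^2*(4*ε*(α2*β2) - (A*β2 + B*α2))*((1-ε)^2*(A*β2 + B*α2) + 4*ε*(1+ε)^2*(α2*β2)) :=
    mul_nonneg (mul_nonneg (by positivity) (by linarith)) (by positivity)
  have nsq : 0 ≤ (1-ε)^2*(1+ε)^2*(A*β2 - B*α2)^2 := by positivity
  have n3 : 4*(α2*β2)*((1+ε^2)^2*(A*B)) ≤ 4*(α2*β2)*(4*ε^2*(((1+ε)^2*α2 - A)*((1+ε)^2*β2 - B))) := by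
    linarith [n2, n1, nsq]
  have n4 : A*B ≤ (1+ε^2)^2*(A*B) := by nlinarith [mul_nonneg (sq_nonneg ε) (mul_nonneg hA hB), mul_nonneg (mul_nonneg (sq_nonneg ε) (sq_nonneg ε)) (mul_nonneg hA hB)]
  have n5 : (1+ε^2)^2*(A*B) ≤ 4*ε^2*(((1+ε)^2*α2 - A)*((1+ε)^2*β2 - B)) :=
    le_of_mul_le_mul_left n3 (by linarith : (0:ℝ) < 4*(α2*β2))
  have hXY : 0 ≤ ((1+ε)^2*α2 - A)*((1+ε)^2*β2 - B) := mul_nonneg hX hY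
  nlinarith [hP, n4, n5, mul_nonneg (mul_nonneg (le_of_lt hε) (le_of_lt hε)) hXY]

lemma mem_colSpan {N d : ℕ} (Φ : Matrix (Fin N) (Fin d) ℝ) (I : Finset (Fin d))
    {v : EuclideanSpace ℝ (Fin N)} (hv : v ∈ colSpan Φ I) :
    ∃ a : Fin d → ℝ, (∀ i, a i ≠ 0 → i ∈ I) ∧
      v = (WithLp.toLp 2 (fun i => Φ.mulVec a i) : EuclideanSpace ℝ (Fin N)) := by
  classical
  induction hv using Submodule.span_induction with
  | mem x hx =>
      obtain ⟨j, hj, rfl⟩ := hx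
      refine ⟨Pi.single j 1, ?_, ?_⟩
      · intro i hi
        by_contra hiI
        have hij : i ≠ j := by rintro rfl; exact hiI hj
        exact hi (Pi.single_eq_of_ne hij 1)
      · ext i
        rw [Matrix.mulVec_single]
        simp
  | zero =>
      exact ⟨0, by simp, by ext i; simp [Matrix.mulVec_zero]⟩
  | add x y hx hy ihx ihy =>
      obtain ⟨a, ha, hax⟩ := ihx
      obtain ⟨b, hb, hbx⟩ := ihy
      refine ⟨a + b, ?_, ?_⟩
      · intro i hi
        by_cases h1 : a i ≠ 0
        · exact ha i h1
        · push_neg at h1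
          apply hb i
          intro h2
          apply hi
          simp [Pi.add_apply, h1, h2]
      · rw [hax, hbx]
        ext i
        simp [Matrix.mulVec_add]
  | smul c x hx ih =>
      obtain ⟨a, ha, hax⟩ := ih
      refine ⟨c • a, ?_, ?_⟩
      · intro i hi
        apply ha i
        intro h
        apply hi
        simp [Pi.smul_apply, h]
      · rw [hax]
        ext i
        simp [Matrix.mulVec_smul]

lemma inner_bound {N d : ℕ} (Φ : Matrix (Fin N) (Fin d) ℝ) (n : ℕ) (ε : ℝ)
    (hε : 0 < ε) (hε1 : ε < 1) (hRIC : RIC Φ (2 * n) ε)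
    (I J : Finset (Fin d)) (hdisj : Disjoint I J) (hcard : (I ∪ J).card ≤ 2 * n)
    (a b : Fin d → ℝ) (ha : ∀ i, a i ≠ 0 → i ∈ I) (hb : ∀ i, b i ≠ 0 → i ∈ J) :
    |∑ i, Φ.mulVec a i * Φ.mulVec b i| ≤
      2.2 * ε * (l2 (Φ.mulVec a) * l2 (Φ.mulVec b)) := by
  classical
  have hRHS : 0 ≤ 2.2 * ε * (l2 (Φ.mulVec a) * l2 (Φ.mulVec b)) :=
    mul_nonneg (mul_nonneg (by norm_num) hε.le) (mul_nonneg (l2_nonneg _) (l2_nonneg _))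
  obtain ⟨X, hXdef⟩ : ∃ X, ∑ i, (Φ.mulVec a i)^2 = X := ⟨_, rfl⟩
  obtain ⟨Y, hYdef⟩ : ∃ Y, ∑ i, (Φ.mulVec b i)^2 = Y := ⟨_, rfl⟩
  obtain ⟨P, hPdef⟩ : ∃ P, ∑ i, Φ.mulVec a i * Φ.mulVec b i = P := ⟨_, rfl⟩
  obtain ⟨α2, hα2def⟩ : ∃ w, ∑ i, (a i)^2 = w := ⟨_, rfl⟩
  obtain ⟨β2, hβ2def⟩ : ∃ w, ∑ i, (b i)^2 = w := ⟨_, rfl⟩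
  rw [hPdef]
  have hXpos : 0 ≤ X := hXdef ▸ (by positivity)
  have hYpos : 0 ≤ Y := hYdef ▸ (by positivity)
  have hαpos : 0 ≤ α2 := hα2def ▸ (by positivity)
  have hβpos : 0 ≤ β2 := hβ2def ▸ (by positivity)
  have hab : ∀ i, a i * b i = 0 := by
    intro i
    by_cases h1 : a i = 0
    · simp [h1]
    by_cases h2 : b i = 0
    · simp [h2]
    exact absurd (hb i h2) (Finset.disjoint_left.mp hdisj (ha i h1))
  have hsupp : ∀ t : ℝ, (spt (a - t • b)).card ≤ 2 * n := by
    intro t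
    refine le_trans (Finset.card_le_card (spt_subset ?_)) hcard
    intro i hi
    rw [Finset.mem_union]
    by_cases h1 : a i = 0
    · right
      apply hb i
      intro h2
      exact hi (by simp [Pi.sub_apply, Pi.smul_apply, smul_eq_mul, h1, h2])
    · exact Or.inl (ha i h1)
  have key : ∀ t : ℝ, (1-ε)^2 * (α2 + t^2*β2) ≤ X - 2*t*P + t^2*Y ∧
      X - 2*t*P + t^2*Y ≤ (1+ε)^2 * (α2 + t^2*β2) := by
    intro t
    obtain ⟨h1, h2⟩ := hRIC (a - t • b) (hsupp t)
    have hz : (l2 (a - t • b))^2 = α2 + t^2*β2 := by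
      rw [l2_sq]
      calc ∑ i, ((a - t • b) i)^2 = ∑ i, ((a i)^2 + t^2*(b i)^2) := by
            refine Finset.sum_congr rfl fun i _ => ?_
            have h3 := hab i
            simp only [Pi.sub_apply, Pi.smul_apply, smul_eq_mul]
            linear_combination (-2*t) * h3
      _ = α2 + t^2*β2 := by
            rw [Finset.sum_add_distrib, ← Finset.mul_sum, hα2def, hβ2def]
    have hΦz : (l2 (Φ.mulVec (a - t • b)))^2 = X - 2*t*P + t^2*Y := by
      rw [l2_sq]
      have hmv : ∀ i, Φ.mulVec (a - t • b) i = Φ.mulVec a i - t * Φ.mulVec b i := by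
        intro i
        rw [Matrix.mulVec_sub, Matrix.mulVec_smul]
        simp
      calc ∑ i, (Φ.mulVec (a - t • b) i)^2
          = ∑ i, ((Φ.mulVec a i)^2 - 2*t*(Φ.mulVec a i * Φ.mulVec b i) + t^2*(Φ.mulVec b i)^2) := by
            refine Finset.sum_congr rfl fun i _ => ?_
            rw [hmv i]; ring
      _ = X - 2*t*P + t^2*Y := by
            rw [Finset.sum_add_distrib, Finset.sum_sub_distrib, ← Finset.mul_sum, ← Finset.mul_sum,
              hXdef, hYdef, hPdef]
    constructor
    · have h1' := pow_le_pow_left₀ (mul_nonneg (by linarith) (l2_nonneg _)) h1 2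
      rw [mul_pow, hz, hΦz] at h1'
      exact h1'
    · have h2' := pow_le_pow_left₀ (l2_nonneg _) h2 2
      rw [mul_pow, hz, hΦz] at h2'
      exact h2'
  have hXlow : (1-ε)^2*α2 ≤ X := by linarith [(key 0).1]
  have hXhigh : X ≤ (1+ε)^2*α2 := by linarith [(key 0).2]
  have hbY : (1-ε)^2*β2 ≤ Y ∧ Y ≤ (1+ε)^2*β2 := by
    have hsb : (spt b).card ≤ 2 * n := by
      refine le_trans (Finset.card_le_card (spt_subset fun i hi => ?_)) hcard
      exact Finset.mem_union.mpr (Or.inr (hb i hi))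
    obtain ⟨g1, g2⟩ := hRIC b hsb
    have e1 : (l2 b)^2 = β2 := (l2_sq b).trans hβ2def
    have e2 : (l2 (Φ.mulVec b))^2 = Y := (l2_sq _).trans hYdef
    constructor
    · have := pow_le_pow_left₀ (mul_nonneg (by linarith) (l2_nonneg _)) g1 2
      rw [mul_pow, e1, e2] at this
      exact this
    · have := pow_le_pow_left₀ (l2_nonneg _) g2 2
      rw [mul_pow, e1, e2] at this
      exact this
  obtain ⟨hYlow, hYhigh⟩ := hbY
  have hA : 0 ≤ X - (1-ε)^2*α2 := by linarith
  have hB : 0 ≤ Y - (1-ε)^2*β2 := by linarith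
  have hA' : 0 ≤ (1+ε)^2*α2 - X := by linarith
  have hB' : 0 ≤ (1+ε)^2*β2 - Y := by linarith
  have hPAB : P^2 ≤ (X - (1-ε)^2*α2) * (Y - (1-ε)^2*β2) := by
    refine sq_le_of_forall_quad _ _ _ hA hB fun t => ?_
    linarith [(key t).1]
  have hPAB' : P^2 ≤ ((1+ε)^2*α2 - X) * ((1+ε)^2*β2 - Y) := by
    have h := sq_le_of_forall_quad (-P) _ _ hA' hB' fun t => by linarith [(key t).2]
    rw [neg_sq] at h
    exact h
  -- main bound on P^2
  have hfin : P^2 ≤ 4.84*ε^2*(X*Y) := by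
    have hRHS0 : 0 ≤ 4.84*ε^2*(X*Y) :=
      mul_nonneg (by positivity) (mul_nonneg hXpos hYpos)
    rcases eq_or_lt_of_le hαpos with hα0 | hα0
    · have hX0 : X = 0 := by
        refine le_antisymm ?_ hXpos
        rw [← hα0] at hXhigh
        linarith [hXhigh]
      have hP2 : P^2 ≤ 0 := by
        have h := hPAB
        rw [hX0, ← hα0] at h
        have hz : ((0:ℝ) - (1-ε)^2*0) * (Y - (1-ε)^2*β2) = 0 := by ring
        rw [hz] at h
        exact h
      linarith [hP2, hRHS0]
    rcases eq_or_lt_of_le hβpos with hβ0 | hβ0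
    · have hY0 : Y = 0 := by
        refine le_antisymm ?_ hYpos
        rw [← hβ0] at hYhigh
        linarith [hYhigh]
      have hP2 : P^2 ≤ 0 := by
        have h := hPAB
        rw [hY0, ← hβ0] at h
        have hz : (X - (1-ε)^2*α2) * ((0:ℝ) - (1-ε)^2*0) = 0 := by ring
        rw [hz] at h
        exact h
      linarith [hP2, hRHS0]
    have hG : 0 < α2 * β2 := mul_pos hα0 hβ0
    rcases le_total ((X - (1-ε)^2*α2)*β2 + (Y - (1-ε)^2*β2)*α2) (4*ε*(α2*β2)) with hs | hs
    · have h := branch1 ε α2 β2 (X - (1-ε)^2*α2) (Y - (1-ε)^2*β2) P hε hε1 hαpos hβpos hA hB hPAB hs hG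
      have e : 4.84*ε^2*(((1-ε)^2*α2 + (X - (1-ε)^2*α2))*((1-ε)^2*β2 + (Y - (1-ε)^2*β2)))
          = 4.84*ε^2*(X*Y) := by ring
      linarith [h, e.le, e.ge]
    · have hs' : ((1+ε)^2*α2 - X)*β2 + ((1+ε)^2*β2 - Y)*α2 ≤ 4*ε*(α2*β2) := by nlinarith [hs]
      have hXX : 0 ≤ (1+ε)^2*α2 - ((1+ε)^2*α2 - X) := by linarith
      have hYY : 0 ≤ (1+ε)^2*β2 - ((1+ε)^2*β2 - Y) := by linarith
      have h := branch2 ε α2 β2 ((1+ε)^2*α2 - X) ((1+ε)^2*β2 - Y) P hε hε1 hαpos hβpos hA' hB' hXX hYY hPAB' hs' hG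
      have e : 4.84*ε^2*(((1+ε)^2*α2 - ((1+ε)^2*α2 - X))*((1+ε)^2*β2 - ((1+ε)^2*β2 - Y)))
          = 4.84*ε^2*(X*Y) := by ring
      linarith [h, e.le, e.ge]
  -- conclude
  have e1 : (l2 (Φ.mulVec a))^2 = X := (l2_sq _).trans hXdef
  have e2 : (l2 (Φ.mulVec b))^2 = Y := (l2_sq _).trans hYdef
  have hsq : (2.2 * ε * (l2 (Φ.mulVec a) * l2 (Φ.mulVec b)))^2 = 4.84*ε^2*(X*Y) := by
    rw [mul_pow, mul_pow, mul_pow, e1, e2]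
    norm_num
  calc |P| = Real.sqrt (P^2) := (Real.sqrt_sq_eq_abs P).symm
  _ ≤ Real.sqrt ((2.2 * ε * (l2 (Φ.mulVec a) * l2 (Φ.mulVec b)))^2) :=
      Real.sqrt_le_sqrt (by rw [hsq]; exact hfin)
  _ = 2.2 * ε * (l2 (Φ.mulVec a) * l2 (Φ.mulVec b)) := Real.sqrt_sq hRHS

lemma l2_eq_norm {N : ℕ} (v : EuclideanSpace ℝ (Fin N)) : l2 (fun i => v i) = ‖v‖ := by
  rw [EuclideanSpace.norm_eq, l2]
  congr 1
  refine Finset.sum_congr rfl fun i _ => ?_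
  rw [Real.norm_eq_abs, sq_abs]

lemma inner_bound' {N d : ℕ} (Φ : Matrix (Fin N) (Fin d) ℝ) (n : ℕ) (ε : ℝ)
    (hε : 0 < ε) (hε1 : ε < 1) (hRIC : RIC Φ (2 * n) ε)
    (I J : Finset (Fin d)) (hdisj : Disjoint I J) (hcard : (I ∪ J).card ≤ 2 * n)
    {u v : EuclideanSpace ℝ (Fin N)} (hu : u ∈ colSpan Φ I) (hv : v ∈ colSpan Φ J) :
    |(inner ℝ u v : ℝ)| ≤ 2.2 * ε * (‖u‖ * ‖v‖) := by
  obtain ⟨a, ha, hua⟩ := mem_colSpan Φ I hu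
  obtain ⟨b, hb, hvb⟩ := mem_colSpan Φ J hv
  have hi : (inner ℝ u v : ℝ) = ∑ i, Φ.mulVec a i * Φ.mulVec b i := by
    rw [hua, hvb, PiLp.inner_apply]
    refine Finset.sum_congr rfl fun i _ => ?_
    simp [RCLike.inner_apply, mul_comm]
  have h1 : l2 (Φ.mulVec a) = ‖u‖ := by rw [hua]; exact l2_eq_norm (WithLp.toLp 2 (Φ.mulVec a))
  have h2 : l2 (Φ.mulVec b) = ‖v‖ := by rw [hvb]; exact l2_eq_norm (WithLp.toLp 2 (Φ.mulVec b))
  rw [hi, ← h1, ← h2]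
  exact inner_bound Φ n ε hε hε1 hRIC I J hdisj hcard a b ha hb

/-- Almost orthogonality of columns. -/
theorem stmt6 {N d : ℕ} (Φ : Matrix (Fin N) (Fin d) ℝ) (n : ℕ) (ε : ℝ)
    (hε : 0 < ε) (hε1 : ε < 1) (hRIC : RIC Φ (2 * n) ε)
    (I J : Finset (Fin d)) (hdisj : Disjoint I J) (hcard : (I ∪ J).card ≤ 2 * n) :
    ‖(proj (colSpan Φ I)).comp (proj (colSpan Φ J))‖ ≤ 2.2 * ε := by
  have hM : (0:ℝ) ≤ 2.2 * ε := mul_nonneg (by norm_num) hε.le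
  refine ContinuousLinearMap.opNorm_le_bound _ hM fun x => ?_
  rw [ContinuousLinearMap.comp_apply]
  set U := colSpan Φ I
  set V := colSpan Φ J
  have hwdef : proj V x = (V.orthogonalProjectionOnto x : EuclideanSpace ℝ (Fin N)) := rfl
  have hzdef : proj U (proj V x) =
      (U.orthogonalProjectionOnto (proj V x) : EuclideanSpace ℝ (Fin N)) := rfl
  have hwV : proj V x ∈ V := hwdef ▸ SetLike.coe_mem _
  have hzU : proj U (proj V x) ∈ U := hzdef ▸ SetLike.coe_mem _
  have hwnorm : ‖proj V x‖ ≤ ‖x‖ := by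
    rw [hwdef]
    calc ‖(V.orthogonalProjectionOnto x : EuclideanSpace ℝ (Fin N))‖
        = ‖V.orthogonalProjectionOnto x‖ := rfl
    _ ≤ ‖V.orthogonalProjectionOnto‖ * ‖x‖ := (V.orthogonalProjectionOnto).le_opNorm x
    _ ≤ 1 * ‖x‖ := mul_le_mul_of_nonneg_right (V.orthogonalProjectionOnto_norm_le) (norm_nonneg x)
    _ = ‖x‖ := one_mul _
  have hinner : (inner ℝ (proj U (proj V x)) (proj V x) : ℝ) = ‖proj U (proj V x)‖^2 := by
    have h0 := Submodule.starProjection_inner_eq_zero (𝕜 := ℝ) (proj V x)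
      (proj U (proj V x)) hzU
    rw [show U.starProjection (proj V x) = proj U (proj V x) from rfl] at h0
    rw [inner_sub_left] at h0
    have h1 : (inner ℝ (proj V x) (proj U (proj V x)) : ℝ) = (inner ℝ (proj U (proj V x)) (proj U (proj V x)) : ℝ) := by
      linarith [h0]
    rw [real_inner_comm] at h1
    rw [h1, real_inner_self_eq_norm_sq]
  have hbound := inner_bound' Φ n ε hε hε1 hRIC I J hdisj hcard hzU hwV
  rw [hinner] at hbound
  have habs : ‖proj U (proj V x)‖^2 ≤ 2.2 * ε * (‖proj U (proj V x)‖ * ‖proj V x‖) :=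
    le_trans (le_abs_self _) hbound
  rcases eq_or_lt_of_le (norm_nonneg (proj U (proj V x))) with hz0 | hz0
  · rw [← hz0]
    exact mul_nonneg hM (norm_nonneg x)
  · have h2 : ‖proj U (proj V x)‖ ≤ 2.2 * ε * ‖proj V x‖ := by
      have := habs
      nlinarith [hz0]
    calc ‖proj U (proj V x)‖ ≤ 2.2 * ε * ‖proj V x‖ := h2
    _ ≤ 2.2 * ε * ‖x‖ := mul_le_mul_of_nonneg_left hwnorm hM
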